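/- Lower semicontinuity of the quadratic-form functional with respect to the quadratic form: let ρ be a finite Borel measure on [0,T]×𝕋³, W an ℝ^d-valued Borel measure there, and let Q_n, Q ∈ C([0,T]×𝕋³, ℝ^{d×d}) be continuous uniformly positive definite symmetric matrix fields with ‖Q_n - Q‖_∞ → 0. Define Λ̃(ρ,W,Q) = sup{∫∫ a dρ + A·dW : (a,A) continuous, a + |Q^{-1/2}A|²/2 ≤ 0}. Then liminf_{n→∞} Λ̃(ρ,W,Q_n) ≥ Λ̃(ρ,W,Q). -/

import Mathlib

open MeasureTheory
noncomputable section

/-- The 3-torus `𝕋³ = ℝ³/ℤ³`. -/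
abbrev T3 : Type := UnitAddCircle × UnitAddCircle × UnitAddCircle

/-- Pairing of a signed (Borel) measure with a function, `∫ f ds`. -/
def pairSM {α : Type*} [MeasurableSpace α] (s : SignedMeasure α) (f : α → ℝ) : ℝ :=
  ∫ x, f x ∂s.toJordanDecomposition.posPart - ∫ x, f x ∂s.toJordanDecomposition.negPart

/-- The quadratic-form entropy functional
`Λ̃(ρ,W,Q) = sup { ∫ a dρ + ∫ A·dW : (a,A) continuous, a + |Q^{-1/2}A|²/2 ≤ 0 }`,
where the constraint is written equivalently as `a + (Q⁻¹A)·A/2 ≤ 0`. -/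
def LamQ {X : Type*} [MeasurableSpace X] [TopologicalSpace X] {d : ℕ}
    (ρ : Measure X) (W : Fin d → SignedMeasure X) (Q : X → Matrix (Fin d) (Fin d) ℝ) : EReal :=
  sSup { r : EReal | ∃ (a : C(X, ℝ)) (A : Fin d → C(X, ℝ)),
    (∀ p, a p + (dotProduct (Matrix.mulVec (Q p)⁻¹ (fun i => A i p)) (fun i => A i p)) / 2 ≤ 0) ∧
    r = ((∫ p, a p ∂ρ + ∑ i, pairSM (W i) ⇑(A i) : ℝ) : EReal) }

section LamQAux
open Matrix

lemma pd_isUnit {d : ℕ} {c : ℝ} (hc : 0 < c) (S : Matrix (Fin d) (Fin d) ℝ)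
    (h : ∀ x : Fin d → ℝ, c * (x ⬝ᵥ x) ≤ S.mulVec x ⬝ᵥ x) : IsUnit S.det := by
  rw [← Matrix.isUnit_iff_isUnit_det, ← Matrix.mulVec_injective_iff_isUnit]
  intro x y hxy
  have h0 : S.mulVec (x - y) = 0 := by
    rw [Matrix.mulVec_sub, hxy, sub_self]
  have h1 := h (x - y)
  rw [h0, zero_dotProduct] at h1
  have h2 : (0:ℝ) ≤ (x - y) ⬝ᵥ (x - y) := Finset.sum_nonneg fun i _ => mul_self_nonneg _
  have h3 : (x - y) ⬝ᵥ (x - y) = 0 :=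
    le_antisymm (le_of_mul_le_mul_left (by simpa using h1) hc) h2
  exact sub_eq_zero.mp (dotProduct_self_eq_zero.mp h3)

lemma pd_inv_entry {d : ℕ} {c : ℝ} (hc : 0 < c) (S : Matrix (Fin d) (Fin d) ℝ)
    (h : ∀ x : Fin d → ℝ, c * (x ⬝ᵥ x) ≤ S.mulVec x ⬝ᵥ x) (i j : Fin d) :
    |S⁻¹ i j| ≤ 1 / c := by
  have hu := pd_isUnit hc S h
  set y : Fin d → ℝ := S⁻¹.mulVec (Pi.single j 1) with hy
  have hSy : S.mulVec y = Pi.single j 1 := by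
    rw [hy, Matrix.mulVec_mulVec, Matrix.mul_nonsing_inv _ hu, Matrix.one_mulVec]
  have hq := h y
  rw [hSy, single_dotProduct, one_mul] at hq
  set s := y ⬝ᵥ y with hs
  have hs0 : 0 ≤ s := Finset.sum_nonneg fun k _ => mul_self_nonneg _
  have hterm : ∀ k, y k * y k ≤ s := fun k =>
    Finset.single_le_sum (f := fun k => y k * y k) (fun k _ => mul_self_nonneg _) (Finset.mem_univ k)
  have hyj : y j * y j ≤ s := hterm j
  have hkey : (c*s)*(c*s) ≤ s :=
    le_trans (mul_le_mul hq hq (mul_nonneg hc.le hs0) ((mul_nonneg hc.le hs0).trans hq)) hyj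
  have hs' : c * c * s ≤ 1 := by nlinarith [hkey, hs0, hc]
  set u : ℝ := 1 / c with hudef
  have hu1 : c * u = 1 := mul_one_div_cancel hc.ne'
  have hu0 : 0 < u := by positivity
  have hcu2 : (c*u)*(c*u) = 1 := by rw [hu1]; ring
  have hsu : s ≤ u * u := by nlinarith [hs', hcu2, mul_pos hc hc, hs0]
  have hyi : y i * y i ≤ s := hterm i
  have hgoal : |y i| ≤ u := by
    rw [abs_le]
    constructor <;> nlinarith [hyi, hsu, hu0]
  have hEq : S⁻¹ i j = y i := by
    rw [hy]; simp [Matrix.mulVec, dotProduct_single]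
  rw [hEq]; exact hgoal


variable {d : ℕ}

lemma lamQ_inv_sub_inv (S S' : Matrix (Fin d) (Fin d) ℝ) (hu : IsUnit S.det) (hu' : IsUnit S'.det) :
    S⁻¹ - S'⁻¹ = S⁻¹ * (S' - S) * S'⁻¹ := by
  have h : S⁻¹ * (S' - S) * S'⁻¹ = S⁻¹ * S' * S'⁻¹ - S⁻¹ * S * S'⁻¹ := by
    rw [Matrix.mul_sub, Matrix.sub_mul]
  rw [h, Matrix.mul_assoc S⁻¹ S' S'⁻¹, Matrix.mul_nonsing_inv _ hu', Matrix.mul_one,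
    Matrix.nonsing_inv_mul _ hu, Matrix.one_mul]

lemma entry_prod_bound (P B C : Matrix (Fin d) (Fin d) ℝ) (a b cc : ℝ)
    (ha : ∀ i j, |P i j| ≤ a) (hb : ∀ i j, |B i j| ≤ b) (hcc : ∀ i j, |C i j| ≤ cc)
    (ha0 : 0 ≤ a) (hb0 : 0 ≤ b) (hc0 : 0 ≤ cc) (i j : Fin d) :
    |(P * B * C) i j| ≤ (d:ℝ) * ((d:ℝ) * (a * b) * cc) := by
  have hPB : ∀ l, |(P * B) i l| ≤ (d:ℝ) * (a * b) := by
    intro l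
    rw [Matrix.mul_apply]
    calc |∑ k, P i k * B k l| ≤ ∑ k, |P i k * B k l| := Finset.abs_sum_le_sum_abs _ _
      _ ≤ ∑ _k : Fin d, a * b := Finset.sum_le_sum fun k _ => by
          rw [abs_mul]; exact mul_le_mul (ha i k) (hb k l) (abs_nonneg _) ha0
      _ = (d:ℝ) * (a * b) := by simp [Finset.sum_const, Finset.card_univ, nsmul_eq_mul]
  rw [Matrix.mul_apply]
  calc |∑ l, (P * B) i l * C l j| ≤ ∑ l, |(P * B) i l * C l j| := Finset.abs_sum_le_sum_abs _ _
    _ ≤ ∑ _l : Fin d, ((d:ℝ) * (a * b)) * cc := Finset.sum_le_sum fun l _ => by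
        rw [abs_mul]; exact mul_le_mul (hPB l) (hcc l j) (abs_nonneg _) (by positivity)
    _ = (d:ℝ) * ((d:ℝ) * (a * b) * cc) := by
        simp [Finset.sum_const, Finset.card_univ, nsmul_eq_mul]

lemma quad_bound (Mm : Matrix (Fin d) (Fin d) ℝ) (v : Fin d → ℝ) (K B : ℝ)
    (hK : ∀ i j, |Mm i j| ≤ K) (hv : ∀ i, |v i| ≤ B) (hK0 : 0 ≤ K) (hB0 : 0 ≤ B) :
    |Mm.mulVec v ⬝ᵥ v| ≤ (d:ℝ) * ((d:ℝ) * (K * B) * B) := by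
  have hrow : ∀ i, |Mm.mulVec v i| ≤ (d:ℝ) * (K * B) := by
    intro i
    show |∑ j, Mm i j * v j| ≤ _
    calc |∑ j, Mm i j * v j| ≤ ∑ j, |Mm i j * v j| := Finset.abs_sum_le_sum_abs _ _
      _ ≤ ∑ _j : Fin d, K * B := Finset.sum_le_sum fun j _ => by
          rw [abs_mul]; exact mul_le_mul (hK i j) (hv j) (abs_nonneg _) hK0
      _ = (d:ℝ) * (K * B) := by simp [Finset.sum_const, Finset.card_univ, nsmul_eq_mul]
  calc |Mm.mulVec v ⬝ᵥ v| ≤ ∑ i, |Mm.mulVec v i * v i| := Finset.abs_sum_le_sum_abs _ _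
    _ ≤ ∑ _i : Fin d, ((d:ℝ) * (K * B)) * B := Finset.sum_le_sum fun i _ => by
        rw [abs_mul]; exact mul_le_mul (hrow i) (hv i) (abs_nonneg _) (by positivity)
    _ = (d:ℝ) * ((d:ℝ) * (K * B) * B) := by
        simp [Finset.sum_const, Finset.card_univ, nsmul_eq_mul]

lemma cont_inv {X : Type*} [TopologicalSpace X] {c : ℝ} (hc : 0 < c)
    (Q : X → Matrix (Fin d) (Fin d) ℝ) (hQc : Continuous Q)
    (hb : ∀ p (x : Fin d → ℝ), c * (x ⬝ᵥ x) ≤ (Q p).mulVec x ⬝ᵥ x) :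
    Continuous fun p => (Q p)⁻¹ := by
  have hdet : ∀ p, IsUnit (Q p).det := fun p => pd_isUnit hc _ (hb p)
  have heq : (fun p => (Q p)⁻¹) = fun p => ((Q p).det)⁻¹ • (Q p).adjugate := by
    funext p; rw [Matrix.inv_def, Ring.inverse_eq_inv']
  rw [heq]
  exact (hQc.matrix_det.inv₀ fun p => (hdet p).ne_zero).smul hQc.matrix_adjugate



end LamQAux

/-- lower semicontinuity of the quadratic-form functional with
respect to the quadratic form: on `[0,T]×𝕋³`, for a finite Borel measure `ρ`, an
`ℝ^d`-valued Borel measure `W`, and continuous uniformly positive definite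
symmetric matrix fields `Qₙ → Q` uniformly, one has
`liminf Λ̃(ρ,W,Qₙ) ≥ Λ̃(ρ,W,Q)`. -/
theorem lamQ_lsc_in_Q (T : ℝ) (hT : 0 < T) (d : ℕ)
    (ρ : Measure (Set.Icc (0:ℝ) T × T3)) [IsFiniteMeasure ρ]
    (W : Fin d → SignedMeasure (Set.Icc (0:ℝ) T × T3))
    (Q : Set.Icc (0:ℝ) T × T3 → Matrix (Fin d) (Fin d) ℝ)
    (Qn : ℕ → Set.Icc (0:ℝ) T × T3 → Matrix (Fin d) (Fin d) ℝ)
    (hQc : Continuous Q) (hQnc : ∀ n, Continuous (Qn n))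
    (hQsymm : ∀ p, (Q p).IsSymm) (hQnsymm : ∀ n p, (Qn n p).IsSymm)
    (hQunif : ∃ c > 0, ∀ p (x : Fin d → ℝ),
      c * dotProduct x x ≤ dotProduct (Matrix.mulVec (Q p) x) x)
    (hQnunif : ∃ c > 0, ∀ n p (x : Fin d → ℝ),
      c * dotProduct x x ≤ dotProduct (Matrix.mulVec (Qn n p) x) x)
    (hconv : ∀ ε > 0, ∃ N : ℕ, ∀ n ≥ N, ∀ p i j, |Qn n p i j - Q p i j| < ε) :
    LamQ ρ W Q ≤ Filter.liminf (fun n => LamQ ρ W (Qn n)) Filter.atTop := by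
  classical
  obtain ⟨c, hc, hQb⟩ := hQunif
  obtain ⟨c', hc', hQnb⟩ := hQnunif
  haveI hbs : BorelSpace (Set.Icc (0:ℝ) T × T3) := inferInstance
  refine sSup_le ?_
  rintro r ⟨a, A, hadm, rfl⟩
  set v : ℝ := ∫ p, a p ∂ρ + ∑ i, pairSM (W i) ⇑(A i) with hv
  by_contra hlt
  push_neg at hlt
  obtain ⟨z, hz1, hz2⟩ := EReal.exists_between_coe_real hlt
  have hzv : z < v := by exact_mod_cast hz2
  have hε : 0 < v - z := by linarith
  refine absurd ?_ (not_le.mpr hz1)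
  have hAb : ∀ (i : Fin d) p, |A i p| ≤ 1 + ∑ k, ‖A k‖ := by
    intro i p
    have h1 : |A i p| ≤ ‖A i‖ := by simpa using (A i).norm_coe_le_norm p
    have h2 : ‖A i‖ ≤ ∑ k, ‖A k‖ :=
      Finset.single_le_sum (fun k _ => norm_nonneg (A k)) (Finset.mem_univ i)
    linarith
  set M : ℝ := 1 + ∑ k, ‖A k‖ with hMdef
  have hM1 : (1:ℝ) ≤ M := le_add_of_nonneg_right (Finset.sum_nonneg fun k _ => norm_nonneg _)
  have hM0 : (0:ℝ) ≤ M := by linarith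
  set R : ℝ := (ρ Set.univ).toReal with hRdef
  have hR0 : 0 ≤ R := ENNReal.toReal_nonneg
  set C0 : ℝ := (d:ℝ)^4 * M^2 / (c*c') / 2 with hC0
  have hC00 : 0 ≤ C0 := by positivity
  set D : ℝ := C0 * R + 1 with hDdef
  have hD : 0 < D := by positivity
  set ε1 : ℝ := (v - z) / D with hε1def
  have hε10 : 0 < ε1 := div_pos hε hD
  obtain ⟨N, hN⟩ := hconv ε1 hε10
  refine Filter.le_liminf_of_le (by isBoundedDefault) ?_
  filter_upwards [Filter.eventually_ge_atTop N] with n hn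
  have hQdet : ∀ p, IsUnit (Q p).det := fun p => pd_isUnit hc _ (hQb p)
  have hQndet : ∀ p, IsUnit (Qn n p).det := fun p => pd_isUnit hc' _ (hQnb n p)
  have hinvQc : Continuous fun p => (Q p)⁻¹ := cont_inv hc Q hQc hQb
  have hinvQnc : Continuous fun p => (Qn n p)⁻¹ := cont_inv hc' (Qn n) (hQnc n) (hQnb n)
  have hAvc : Continuous fun p : Set.Icc (0:ℝ) T × T3 => (fun i => A i p) :=
    continuous_pi fun i => (A i).continuous
  set g : Set.Icc (0:ℝ) T × T3 → ℝ := fun p =>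
    (dotProduct (Matrix.mulVec (Q p)⁻¹ (fun i => A i p)) (fun i => A i p)) / 2
    - (dotProduct (Matrix.mulVec (Qn n p)⁻¹ (fun i => A i p)) (fun i => A i p)) / 2
    with hgdef
  have hgc : Continuous g :=
    ((((hinvQc.matrix_mulVec hAvc).dotProduct hAvc).div_const 2).sub
      (((hinvQnc.matrix_mulVec hAvc).dotProduct hAvc).div_const 2))
  set at_ : C(Set.Icc (0:ℝ) T × T3, ℝ) :=
    ⟨fun p => a p + g p, (map_continuous a).add hgc⟩ with hatdef
  have hmem : ∀ p, at_ p +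
      (dotProduct (Matrix.mulVec (Qn n p)⁻¹ (fun i => A i p)) (fun i => A i p)) / 2 ≤ 0 := by
    intro p
    have h0 := hadm p
    simp only [hatdef, ContinuousMap.coe_mk, hgdef]
    linarith
  have hle : ((∫ p, at_ p ∂ρ + ∑ i, pairSM (W i) ⇑(A i) : ℝ) : EReal) ≤ LamQ ρ W (Qn n) :=
    le_sSup ⟨at_, A, hmem, rfl⟩
  refine le_trans ?_ hle
  rw [EReal.coe_le_coe_iff]
  have hint_a : Integrable ⇑a ρ :=
    (map_continuous a).integrable_of_hasCompactSupport (HasCompactSupport.of_compactSpace _)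
  have hint_g : Integrable g ρ :=
    hgc.integrable_of_hasCompactSupport (HasCompactSupport.of_compactSpace _)
  have hsplit : ∫ p, at_ p ∂ρ = (∫ p, a p ∂ρ) + ∫ p, g p ∂ρ := by
    simp only [hatdef, ContinuousMap.coe_mk]
    exact integral_add hint_a hint_g
  have hgb : ∀ p, |g p| ≤ C0 * ε1 := by
    intro p
    have hinvQ : ∀ i j, |(Q p)⁻¹ i j| ≤ 1/c := fun i j => pd_inv_entry hc (Q p) (hQb p) i j
    have hinvQn : ∀ i j, |(Qn n p)⁻¹ i j| ≤ 1/c' :=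
      fun i j => pd_inv_entry hc' (Qn n p) (hQnb n p) i j
    have hBm : ∀ i j, |(Qn n p - Q p) i j| ≤ ε1 := by
      intro i j
      rw [Matrix.sub_apply]
      exact (hN n hn p i j).le
    have hdiff : (Q p)⁻¹ - (Qn n p)⁻¹ = (Q p)⁻¹ * (Qn n p - Q p) * (Qn n p)⁻¹ :=
      lamQ_inv_sub_inv _ _ (hQdet p) (hQndet p)
    have hent : ∀ i j, |((Q p)⁻¹ - (Qn n p)⁻¹) i j| ≤ (d:ℝ) * ((d:ℝ) * ((1/c) * ε1) * (1/c')) := by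
      intro i j; rw [hdiff]
      exact entry_prod_bound _ _ _ _ _ _ hinvQ hBm hinvQn (by positivity) hε10.le (by positivity) i j
    have hq := quad_bound ((Q p)⁻¹ - (Qn n p)⁻¹) (fun i => A i p)
      ((d:ℝ) * ((d:ℝ) * ((1/c) * ε1) * (1/c'))) M hent (fun i => hAb i p) (by positivity) hM0
    have hgp : g p = (dotProduct
        (Matrix.mulVec ((Q p)⁻¹ - (Qn n p)⁻¹) (fun i => A i p)) (fun i => A i p)) / 2 := by
      simp only [hgdef]
      rw [Matrix.sub_mulVec, sub_dotProduct]
      ring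
    have hCeq : (d:ℝ) * ((d:ℝ) * (((d:ℝ) * ((d:ℝ) * ((1/c) * ε1) * (1/c'))) * M) * M) / 2
        = C0 * ε1 := by
      rw [hC0]; field_simp
    rw [hgp, abs_div, abs_two]
    rw [div_le_iff₀ (by norm_num : (0:ℝ) < 2)]
    calc |dotProduct (Matrix.mulVec ((Q p)⁻¹ - (Qn n p)⁻¹) fun i => A i p) fun i => A i p|
        ≤ (d:ℝ) * ((d:ℝ) * (((d:ℝ) * ((d:ℝ) * ((1/c) * ε1) * (1/c'))) * M) * M) := hq
      _ = C0 * ε1 * 2 := by rw [← hCeq]; ring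
  have hIb : |∫ p, g p ∂ρ| ≤ C0 * ε1 * R := by
    have h := norm_integral_le_of_norm_le_const (μ := ρ) (f := g) (C := C0 * ε1)
      (Filter.Eventually.of_forall fun p => by rw [Real.norm_eq_abs]; exact hgb p)
    simpa [Real.norm_eq_abs, hRdef, measureReal_def] using h
  have hexp : C0 * ε1 * R + ε1 = v - z := by
    have h2 : ε1 * D = v - z := div_mul_cancel₀ _ hD.ne'
    rw [← h2, hDdef]; ring
  rw [hsplit]
  have hIlow := (abs_le.mp hIb).1
  have hvv : ∫ p, a p ∂ρ + ∑ i, pairSM (W i) ⇑(A i) = v := hv.symm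
  linarith [hIlow, hexp, hε10]
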